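/- arXiv:1209.5367 — 2 statements merged into one kernel-verified Lean document; each statement's English description precedes it below -/
import Mathlib

section
/- Let M be a unitary operator on H that is causal relative to a neighborhood 𝒩. Then for every x ∈ ℤ^n, every bounded operator on H that is local upon {x} belongs to the subalgebra of bounded operators on H generated by the union over k ∈ 𝒩 of the sets {M† B M : B a bounded operator on H local upon {x − k}}. -/
open scoped ENNReal

noncomputable section

namespace QCA

abbrev Lat (n : ℕ) : Type := Fin n → ℤ

def Conf (n : ℕ) (A : Type*) (q0 : A) : Type _ :=
  {c : Lat n → A // {x : Lat n | c x ≠ q0}.Finite}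

def c0 (n : ℕ) (A : Type*) (q0 : A) : Conf n A q0 :=
  ⟨fun _ => q0, by simp⟩

abbrev H (n : ℕ) (A : Type*) (q0 : A) : Type _ := lp (fun _ : Conf n A q0 => ℂ) 2

def eVec {n : ℕ} {A : Type*} {q0 : A} (c : Conf n A q0) : H n A q0 :=
  letI : DecidableEq (Conf n A q0) := Classical.decEq _
  lp.single 2 c 1

/-- Translation of a configuration by `z`: the configuration `x ↦ c (x + z)`. -/
def shiftConf {n : ℕ} {A : Type*} {q0 : A} (z : Lat n) (c : Conf n A q0) : Conf n A q0 :=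
  ⟨fun x => c.1 (x + z), by
    have h : {x : Lat n | c.1 (x + z) ≠ q0} ⊆ (fun x : Lat n => x + z) ⁻¹' {x | c.1 x ≠ q0} :=
      fun x hx => hx
    exact (c.2.preimage ((add_left_injective z).injOn)).subset h⟩

/-- Translation by `z` as a permutation of the set of finite configurations. -/
def shiftEquiv {n : ℕ} {A : Type*} (q0 : A) (z : Lat n) : Conf n A q0 ≃ Conf n A q0 where
  toFun := shiftConf z
  invFun := shiftConf (-z)
  left_inv c := Subtype.ext (funext fun x => by
    show c.1 (x + -z + z) = c.1 x
    rw [neg_add_cancel_right])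
  right_inv c := Subtype.ext (funext fun x => by
    show c.1 (x + z + -z) = c.1 x
    rw [add_neg_cancel_right])

theorem memℓp_comp_equiv {ι κ : Type*} (e : κ ≃ ι) {f : ι → ℂ} (hf : Memℓp f 2) :
    Memℓp (fun k => f (e k)) 2 := by
  have hp : 0 < (2 : ℝ≥0∞).toReal := by norm_num
  exact memℓp_gen ((e.summable_iff
    (f := fun i => ‖f i‖ ^ (2 : ℝ≥0∞).toReal)).mpr (hf.summable hp))

/-- The unitary operator on `ℓ²` induced by a permutation of the index set. -/
def lpCongr {ι κ : Type*} (e : ι ≃ κ) :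
    lp (fun _ : ι => ℂ) 2 ≃ₗᵢ[ℂ] lp (fun _ : κ => ℂ) 2 where
  toLinearEquiv :=
    { toFun := fun f => ⟨fun k => f (e.symm k), memℓp_comp_equiv e.symm (lp.memℓp f)⟩
      map_add' := fun f g => lp.ext (funext fun k => by
        simp [lp.coeFn_add] <;> rfl)
      map_smul' := fun r f => lp.ext (funext fun k => by
        simp [lp.coeFn_smul])
      invFun := fun g => ⟨fun i => g (e i), memℓp_comp_equiv e (lp.memℓp g)⟩
      left_inv := fun f => lp.ext (funext fun i => by simp)
      right_inv := fun g => lp.ext (funext fun k => by simp) }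
  norm_map' := fun f => by
    have hp : 0 < (2 : ℝ≥0∞).toReal := by norm_num
    rw [lp.norm_eq_tsum_rpow hp, lp.norm_eq_tsum_rpow hp]
    congr 1
    exact e.symm.tsum_eq (fun i => ‖f i‖ ^ (2 : ℝ≥0∞).toReal)

/-- The translation operator `τ_z` on the Hilbert space of finite configurations. -/
def tau {n : ℕ} {A : Type*} (q0 : A) (z : Lat n) : H n A q0 ≃ₗᵢ[ℂ] H n A q0 :=
  lpCongr (shiftEquiv q0 z)

/-- A bounded operator on `H` is translation invariant if `τ_z ∘ M ∘ τ_z⁻¹ = M` for all `z`. -/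
def TranslationInvariant {n : ℕ} {A : Type*} (q0 : A) (M : H n A q0 →L[ℂ] H n A q0) : Prop :=
  ∀ (z : Lat n) (v : H n A q0), tau q0 z (M ((tau q0 z).symm v)) = M v


section Local

variable {n : ℕ} {A : Type*} [Fintype A]

/-- The configuration agreeing with `f` on `D` and with `c` outside `D`. -/
def override {q0 : A} (D : Finset (Lat n)) (f : {x // x ∈ D} → A) (c : Conf n A q0) :
    Conf n A q0 :=
  ⟨fun x => if h : x ∈ D then f ⟨x, h⟩ else c.1 x, by
    refine Set.Finite.subset (Set.Finite.union D.finite_toSet c.2) ?_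
    intro x hx
    rcases Decidable.em (x ∈ D) with h | h
    · exact Set.mem_union_left _ h
    · exact Set.mem_union_right _ (by simpa [h] using hx)⟩

/-- A bounded operator on the Hilbert space of finite configurations is local upon the finite
set `D` of cells if its action on basis vectors only modifies, and only reads, the cells in `D`. -/
def IsLocalUpon (q0 : A) (D : Finset (Lat n)) (T : H n A q0 →L[ℂ] H n A q0) : Prop :=
  ∃ a : ({x // x ∈ D} → A) → ({x // x ∈ D} → A) → ℂ, ∀ c : Conf n A q0,
    T (eVec c) = ∑ f : {x // x ∈ D} → A,
      a f (fun x => c.1 x.1) • eVec (override D f c)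

/-- The neighborhood of the cell `x`: `𝒩_x = {x + k : k ∈ 𝒩}`. -/
def nbhd {n : ℕ} (𝒩 : Finset (Lat n)) (x : Lat n) : Finset (Lat n) :=
  𝒩.image (fun k => x + k)

/-- The reflected neighborhood of the cell `x`: `𝒱_x = {x - k : k ∈ 𝒩}`. -/
def rnbhd {n : ℕ} (𝒩 : Finset (Lat n)) (x : Lat n) : Finset (Lat n) :=
  𝒩.image (fun k => x - k)

/-- A unitary `M` is causal relative to the neighborhood `𝒩` if conjugation `M† A M` maps
operators local upon a cell `x` to operators local upon `𝒩_x`. -/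
def Causal (q0 : A) (𝒩 : Finset (Lat n)) (M : H n A q0 →L[ℂ] H n A q0) : Prop :=
  ∀ (x : Lat n) (B : H n A q0 →L[ℂ] H n A q0), IsLocalUpon q0 {x} B →
    IsLocalUpon q0 (nbhd 𝒩 x) (ContinuousLinearMap.adjoint M ∘L B ∘L M)

end Local

/-- The standard basis vector of the one-cell Hilbert space `ℂ^A`. -/
def wVec (A : Type*) [Fintype A] (a : A) : EuclideanSpace ℂ A :=
  letI : DecidableEq A := Classical.decEq A
  EuclideanSpace.single a 1

/-- The configuration obtained from `c` by replacing the value at the cell `x` by `r`. -/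
def updateConf {n : ℕ} {A : Type*} {q0 : A} (x : Lat n) (r : A) (c : Conf n A q0) :
    Conf n A q0 :=
  ⟨Function.update c.1 x r, by
    refine Set.Finite.subset (c.2.union (Set.finite_singleton x)) ?_
    intro y hy
    rcases eq_or_ne y x with rfl | hxy
    · exact Set.mem_union_right _ rfl
    · exact Set.mem_union_left _ (by
        simpa [Function.update_of_ne hxy] using hy)⟩

/-- The subalgebra `𝔇_{y,x}` of `End(ℂ^A)`: endomorphisms `a` of the one-cell Hilbert space
such that the operator `ι_x(a)` local upon `{x}` implementing `a` at the cell `x` is of the form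
`R† B R` for some operator `B` local upon `{x - y}`. -/
def Dset {n : ℕ} {A : Type*} [Fintype A] (q0 : A)
    (R : H n A q0 →L[ℂ] H n A q0) (y x : Lat n) :
    Set (Module.End ℂ (EuclideanSpace ℂ A)) :=
  {a | ∃ B : H n A q0 →L[ℂ] H n A q0, IsLocalUpon q0 {x - y} B ∧
    ∀ c : Conf n A q0,
      (ContinuousLinearMap.adjoint R ∘L B ∘L R) (eVec c) =
        ∑ q : A, (inner ℂ (wVec A q) (a (wVec A (c.1 x))) : ℂ) • eVec (updateConf x q c)}



section Component

variable {n : ℕ} {𝒩 : Finset (Lat n)} {K : {z // z ∈ 𝒩} → Type*}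

/-- The propagation map on configurations in component form:
`(s c) x z = (c (x + z)) z`. -/
def sConf (qz : ∀ z : {z // z ∈ 𝒩}, K z) (c : Conf n (∀ z : {z // z ∈ 𝒩}, K z) qz) :
    Conf n (∀ z : {z // z ∈ 𝒩}, K z) qz :=
  ⟨fun x z => c.1 (x + z.1) z, by
    refine Set.Finite.subset
      (Set.finite_iUnion (fun z : {z // z ∈ 𝒩} =>
        (c.2.preimage ((add_left_injective z.1).injOn)))) ?_
    intro x hx
    obtain ⟨z, hz⟩ := Function.ne_iff.mp hx
    exact Set.mem_iUnion.2 ⟨z, fun h => hz (congrFun h z)⟩⟩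

end Component

/-- The support of a finite configuration, as a `Finset`. -/
def suppF {n : ℕ} {A : Type*} {q0 : A} (c : Conf n A q0) : Finset (Lat n) :=
  c.2.toFinset

/-- The property characterizing the local isomorphism `S̃ : H → Ĥ` induced by a one-cell
unitary `S : W → Ŵ`. -/
def StildeProp {n : ℕ} {A B : Type*} [Fintype A] [Fintype B] (q0 : A) (qh : B)
    (Slin : EuclideanSpace ℂ A ≃ₗᵢ[ℂ] EuclideanSpace ℂ B)
    (St : H n A q0 ≃ₗᵢ[ℂ] H n B qh) : Prop :=
  ∀ c : Conf n A q0,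
    St (eVec c) = ∑ g : {x // x ∈ suppF c} → B,
      (∏ x : {x // x ∈ suppF c}, (inner ℂ (wVec B (g x)) (Slin (wVec A (c.1 x.1))) : ℂ)) •
        eVec (override (suppF c) g (c0 n B qh))

/-- An endomorphism of the one-cell Hilbert space `ℂ^P`, `P = Π_{z ∈ 𝒩} K z`, acting only on
the `y`-th coordinate. -/
def ActsOnCoord {n : ℕ} {𝒩 : Finset (Lat n)} {K : {z // z ∈ 𝒩} → Type*}
    [∀ z, Fintype (K z)] (y : {z // z ∈ 𝒩})
    (Aop : Module.End ℂ (EuclideanSpace ℂ (∀ z : {z // z ∈ 𝒩}, K z))) : Prop :=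
  ∃ f : K y → K y → ℂ, ∀ p p' : ∀ z : {z // z ∈ 𝒩}, K z,
    ((∀ z : {z // z ∈ 𝒩}, z ≠ y → p z = p' z) →
      (inner ℂ (wVec _ p) (Aop (wVec _ p')) : ℂ) = f (p y) (p' y)) ∧
    (¬ (∀ z : {z // z ∈ 𝒩}, z ≠ y → p z = p' z) →
      (inner ℂ (wVec _ p) (Aop (wVec _ p')) : ℂ) = 0)

/-- A factorization of the module `W` as a tensor product `⨂_{k} V k` carrying the sets of
endomorphisms `Dsets k` onto the endomorphisms acting on the `k`-th tensor factor alone. -/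
structure PiTensorFactorization (ι : Type) [Fintype ι] [DecidableEq ι]
    (W : Type*) [AddCommGroup W] [Module ℂ W]
    (Dsets : ι → Set (Module.End ℂ W)) : Type _ where
  /-- The tensor factors. -/
  V : ι → Type
  [grp : ∀ k, AddCommGroup (V k)]
  [mod : ∀ k, Module ℂ (V k)]
  fin : ∀ k, FiniteDimensional ℂ (V k)
  /-- The linear isomorphism with the tensor product. -/
  S : W ≃ₗ[ℂ] PiTensorProduct ℂ V
  cond : ∀ y : ι,
    (fun a : Module.End ℂ W => S.conj a) '' (Dsets y) =
      Set.range (fun f : Module.End ℂ (V y) =>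
        (PiTensorProduct.map
          (Function.update (fun k => (LinearMap.id : V k →ₗ[ℂ] V k)) y f) :
            Module.End ℂ (PiTensorProduct ℂ V)))

/-- The continuous linear map underlying a linear isometry equivalence. -/
def isomCLM {E F : Type*} [NormedAddCommGroup E] [NormedAddCommGroup F]
    [NormedSpace ℂ E] [NormedSpace ℂ F] (e : E ≃ₗᵢ[ℂ] F) : E →L[ℂ] F :=
  e.toLinearIsometry.toContinuousLinearMap


/-! ### Auxiliary infrastructure for Statement 7 -/

section Aux7

variable {n : ℕ} {Q : Type} [Fintype Q] {q₀ : Q}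
set_option linter.unusedSectionVars false

/-- Coordinates of a basis vector. -/
theorem eVec_apply_self (c : Conf n Q q₀) : (eVec c) c = (1 : ℂ) := by
  letI : DecidableEq (Conf n Q q₀) := Classical.decEq _
  exact lp.single_apply_self 2 c 1

theorem eVec_apply_ne {c c' : Conf n Q q₀} (h : c' ≠ c) : (eVec c) c' = (0 : ℂ) := by
  letI : DecidableEq (Conf n Q q₀) := Classical.decEq _
  exact lp.single_apply_ne 2 c 1 h

/-- Restriction of a configuration to a finite window. -/
abbrev restr (D : Finset (Lat n)) (c : Conf n Q q₀) : {x // x ∈ D} → Q :=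
  fun x => c.1 x.1

theorem override_val_mem {D : Finset (Lat n)} (f : {x // x ∈ D} → Q) (c : Conf n Q q₀)
    {x : Lat n} (h : x ∈ D) : (override D f c).1 x = f ⟨x, h⟩ := dif_pos h

theorem override_val_not_mem {D : Finset (Lat n)} (f : {x // x ∈ D} → Q) (c : Conf n Q q₀)
    {x : Lat n} (h : x ∉ D) : (override D f c).1 x = c.1 x := dif_neg h

theorem restr_override {D : Finset (Lat n)} (f : {x // x ∈ D} → Q) (c : Conf n Q q₀) :
    restr D (override D f c) = f :=
  funext fun x => override_val_mem f c x.2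

theorem override_override {D : Finset (Lat n)} (f g : {x // x ∈ D} → Q) (c : Conf n Q q₀) :
    override D f (override D g c) = override D f c :=
  Subtype.ext (funext fun x => by
    by_cases h : x ∈ D
    · rw [override_val_mem f _ h, override_val_mem f _ h]
    · rw [override_val_not_mem f _ h, override_val_not_mem f _ h, override_val_not_mem g _ h])

theorem override_restr {D : Finset (Lat n)} (c : Conf n Q q₀) :
    override D (restr D c) c = c :=
  Subtype.ext (funext fun x => by
    by_cases h : x ∈ D
    · rw [override_val_mem _ _ h]
    · rw [override_val_not_mem _ _ h])

open Classical in
/-- The permutation of configurations swapping windows `f` and `g` upon `D`. -/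
noncomputable def swapConf (D : Finset (Lat n)) (f g : {x // x ∈ D} → Q)
    (c : Conf n Q q₀) : Conf n Q q₀ :=
  if restr D c = g then override D f c
  else if restr D c = f then override D g c else c

theorem swapConf_of_eq {D : Finset (Lat n)} {f g : {x // x ∈ D} → Q} {c : Conf n Q q₀}
    (h : restr D c = g) : swapConf D f g c = override D f c := by
  rw [swapConf, if_pos h]

theorem swapConf_of_eq' {D : Finset (Lat n)} {f g : {x // x ∈ D} → Q} {c : Conf n Q q₀}
    (h1 : restr D c ≠ g) (h2 : restr D c = f) : swapConf D f g c = override D g c := by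
  rw [swapConf, if_neg h1, if_pos h2]

theorem swapConf_of_ne {D : Finset (Lat n)} {f g : {x // x ∈ D} → Q} {c : Conf n Q q₀}
    (h1 : restr D c ≠ g) (h2 : restr D c ≠ f) : swapConf D f g c = c := by
  rw [swapConf, if_neg h1, if_neg h2]

theorem swapConf_swapConf (D : Finset (Lat n)) (f g : {x // x ∈ D} → Q) (c : Conf n Q q₀) :
    swapConf D f g (swapConf D f g c) = c := by
  by_cases h1 : restr D c = g
  · rw [swapConf_of_eq h1]
    by_cases hfg : f = g
    · subst hfg
      rw [swapConf_of_eq (restr_override f c), override_override, ← h1, override_restr]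
    · rw [swapConf_of_eq' (by rw [restr_override]; exact hfg) (restr_override f c),
        override_override, ← h1, override_restr]
  · by_cases h2 : restr D c = f
    · rw [swapConf_of_eq' h1 h2]
      rw [swapConf_of_eq (restr_override g c), override_override, ← h2, override_restr]
    · rw [swapConf_of_ne h1 h2, swapConf_of_ne h1 h2]

/-- `swapConf` as a permutation. -/
noncomputable def swapEquiv (D : Finset (Lat n)) (f g : {x // x ∈ D} → Q) :
    Conf n Q q₀ ≃ Conf n Q q₀ where
  toFun := swapConf D f g
  invFun := swapConf D f g
  left_inv := swapConf_swapConf D f g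
  right_inv := swapConf_swapConf D f g

theorem memℓp_proj (P : Conf n Q q₀ → Prop) [DecidablePred P] (v : H n Q q₀) :
    Memℓp (fun c => if P c then v c else (0 : ℂ)) 2 := by
  apply memℓp_gen
  refine Summable.of_nonneg_of_le (fun c => by positivity) (fun c => ?_)
    ((lp.memℓp v).summable (by norm_num))
  by_cases h : P c
  · rw [if_pos h]
  · rw [if_neg h, norm_zero, Real.zero_rpow (by norm_num)]
    positivity

open Classical in
/-- Projection onto the configurations satisfying `P`. -/
noncomputable def projCLM (q₀ : Q) (P : Conf n Q q₀ → Prop) : H n Q q₀ →L[ℂ] H n Q q₀ :=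
  LinearMap.mkContinuous
    { toFun := fun v => (⟨fun c => if P c then v c else 0, memℓp_proj P v⟩ : H n Q q₀)
      map_add' := fun v w => lp.ext (funext fun c => by
        show (if P c then (v + w) c else 0)
          = (if P c then v c else 0) + (if P c then w c else 0)
        have hc : (v + w) c = v c + w c := by rw [lp.coeFn_add]; rfl
        by_cases h : P c
        · rw [if_pos h, if_pos h, if_pos h, hc]
        · rw [if_neg h, if_neg h, if_neg h, add_zero])
      map_smul' := fun r v => lp.ext (funext fun c => by
        show (if P c then (r • v) c else 0) = r • (if P c then v c else 0)
        have hc : (r • v) c = r * v c := by rw [lp.coeFn_smul]; rfl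
        by_cases h : P c
        · rw [if_pos h, if_pos h, hc, smul_eq_mul]
        · rw [if_neg h, if_neg h, smul_zero]) }
    1 (fun v => by
      rw [one_mul]
      have h2 : (0:ℝ) < (2 : ℝ≥0∞).toReal := by norm_num
      rw [lp.norm_eq_tsum_rpow h2, lp.norm_eq_tsum_rpow h2 v]
      refine Real.rpow_le_rpow (tsum_nonneg fun c => by positivity)
        (Summable.tsum_le_tsum (fun c => ?_) ?_ ((lp.memℓp v).summable h2)) (by positivity)
      · show ‖if P c then v c else (0:ℂ)‖ ^ (2 : ℝ≥0∞).toReal ≤ _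
        by_cases h : P c
        · rw [if_pos h]
        · rw [if_neg h, norm_zero, Real.zero_rpow (by norm_num)]
          positivity
      · exact (memℓp_proj P v).summable h2)

open Classical in
/-- The elementary operator with kernel concentrated at the pair of windows `(f, g)` upon `D`. -/
noncomputable def kerOp (q₀ : Q) (D : Finset (Lat n)) (f g : {x // x ∈ D} → Q) :
    H n Q q₀ →L[ℂ] H n Q q₀ :=
  isomCLM (lpCongr (swapEquiv (q₀ := q₀) D f g)) ∘L projCLM q₀ (fun c => restr D c = g)

open Classical in
theorem projCLM_apply (q₀ : Q) (P : Conf n Q q₀ → Prop) (v : H n Q q₀) (c : Conf n Q q₀) :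
    (projCLM q₀ P v) c = if P c then v c else 0 := rfl

theorem lpCongr_isomCLM_apply {ι κ : Type} (e : ι ≃ κ) (v : lp (fun _ : ι => ℂ) 2) (k : κ) :
    (isomCLM (lpCongr e) v) k = v (e.symm k) := rfl

open Classical in
theorem kerOp_apply (q₀ : Q) (D : Finset (Lat n)) (f g : {x // x ∈ D} → Q)
    (v : H n Q q₀) (c' : Conf n Q q₀) :
    (kerOp q₀ D f g v) c' =
      if restr D (swapConf D f g c') = g then v (swapConf D f g c') else 0 := by
  have h1 : kerOp q₀ D f g v
      = isomCLM (lpCongr (swapEquiv (q₀ := q₀) D f g)) (projCLM q₀ (fun c => restr D c = g) v) :=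
    rfl
  have h2 : (swapEquiv (q₀ := q₀) D f g).symm c' = swapConf D f g c' := rfl
  rw [h1, lpCongr_isomCLM_apply, projCLM_apply, h2]
  by_cases hx : restr D (swapConf D f g c') = g
  · rw [if_pos hx, if_pos hx]
  · rw [if_neg hx, if_neg hx]

theorem kerOp_eVec_of {D : Finset (Lat n)} {g : {x // x ∈ D} → Q} {c : Conf n Q q₀}
    (f : {x // x ∈ D} → Q) (h : restr D c = g) :
    kerOp q₀ D f g (eVec c) = eVec (override D f c) := by
  apply lp.ext; funext c'
  rw [kerOp_apply]
  by_cases h' : c' = override D f c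
  · have hsw : swapConf D f g c' = c := by
      rw [h', ← swapConf_of_eq h, swapConf_swapConf]
    rw [if_pos (by rw [hsw]; exact h), hsw, eVec_apply_self, h', eVec_apply_self]
  · rw [eVec_apply_ne h']
    by_cases hb : restr D (swapConf D f g c') = g
    · rw [if_pos hb]
      refine eVec_apply_ne fun hc => h' ?_
      have := congrArg (swapConf D f g) hc
      rw [swapConf_swapConf, swapConf_of_eq h] at this
      exact this
    · rw [if_neg hb]

theorem kerOp_eVec_ne {D : Finset (Lat n)} {g : {x // x ∈ D} → Q} {c : Conf n Q q₀}
    (f : {x // x ∈ D} → Q) (h : restr D c ≠ g) :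
    kerOp q₀ D f g (eVec c) = 0 := by
  apply lp.ext; funext c'
  rw [kerOp_apply]
  have h0 : ((0 : H n Q q₀)) c' = 0 := congrFun (lp.coeFn_zero (fun _ : Conf n Q q₀ => ℂ) 2) c'
  rw [h0]
  by_cases hb : restr D (swapConf D f g c') = g
  · rw [if_pos hb]
    refine eVec_apply_ne fun hc => h ?_
    rw [← hc]; exact hb
  · rw [if_neg hb]

/-- Extensionality from the action on basis vectors. -/
theorem clm_ext_eVec {T S : H n Q q₀ →L[ℂ] H n Q q₀}
    (h : ∀ c, T (eVec c) = S (eVec c)) : T = S := by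
  refine ContinuousLinearMap.ext fun v => ?_
  letI : DecidableEq (Conf n Q q₀) := Classical.decEq _
  have hv : HasSum (fun c : Conf n Q q₀ => lp.single 2 c (v c)) v :=
    lp.hasSum_single (by norm_num) v
  have h1 := hv.mapL T
  have h2 := hv.mapL S
  have key : ∀ c : Conf n Q q₀, T (lp.single 2 c (v c)) = S (lp.single 2 c (v c)) := by
    intro c
    have hs : (lp.single 2 c (v c) : H n Q q₀) = v c • eVec c := by
      rw [eVec, ← lp.single_smul, smul_eq_mul, mul_one]
    rw [hs, map_smul, map_smul, h c]
  simp only [key] at h1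
  exact h1.unique h2

theorem isLocalUpon_kerOp (q₀ : Q) (D : Finset (Lat n)) (f g : {x // x ∈ D} → Q) :
    IsLocalUpon q₀ D (kerOp q₀ D f g) := by
  classical
  refine ⟨fun f' g' => (if f' = f then 1 else 0) * (if g' = g then 1 else 0), fun c => ?_⟩
  show kerOp q₀ D f g (eVec c) = ∑ f' : {x // x ∈ D} → Q,
    ((if f' = f then (1:ℂ) else 0) * (if restr D c = g then 1 else 0)) • eVec (override D f' c)
  by_cases h : restr D c = g
  · rw [kerOp_eVec_of f h]
    have hterm : ∀ f' : {x // x ∈ D} → Q,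
        ((if f' = f then (1:ℂ) else 0) * (if restr D c = g then 1 else 0)) •
            eVec (override D f' c)
          = if f' = f then eVec (override D f' c) else 0 := by
      intro f'
      rw [if_pos h, mul_one]
      by_cases hf : f' = f
      · rw [if_pos hf, if_pos hf, one_smul]
      · rw [if_neg hf, if_neg hf, zero_smul]
    rw [Finset.sum_congr rfl fun f' _ => hterm f', Finset.sum_ite_eq' Finset.univ f,
      if_pos (Finset.mem_univ f)]
  · rw [kerOp_eVec_ne f h]
    exact (Finset.sum_eq_zero fun f' _ => by rw [if_neg h, mul_zero, zero_smul]).symm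

open Classical in
/-- A local operator is a linear combination of elementary kernel operators. -/
theorem eq_sum_kerOp {D : Finset (Lat n)} {T : H n Q q₀ →L[ℂ] H n Q q₀}
    (hT : IsLocalUpon q₀ D T) :
    ∃ a : ({x // x ∈ D} → Q) → ({x // x ∈ D} → Q) → ℂ,
      T = ∑ f : {x // x ∈ D} → Q, ∑ g : {x // x ∈ D} → Q, a f g • kerOp q₀ D f g := by
  obtain ⟨a, ha⟩ := hT
  refine ⟨a, clm_ext_eVec fun c => ?_⟩
  rw [ha c]
  show ∑ f : {x // x ∈ D} → Q, a f (restr D c) • eVec (override D f c) = _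
  rw [ContinuousLinearMap.sum_apply]
  refine Finset.sum_congr rfl fun f _ => ?_
  rw [ContinuousLinearMap.sum_apply]
  have hterm : ∀ g : {x // x ∈ D} → Q,
      (a f g • kerOp q₀ D f g) (eVec c)
        = if g = restr D c then a f g • eVec (override D f c) else 0 := by
    intro g
    rw [ContinuousLinearMap.smul_apply]
    by_cases hg : g = restr D c
    · rw [if_pos hg, kerOp_eVec_of f hg.symm]
    · rw [if_neg hg, kerOp_eVec_ne f (fun hh => hg hh.symm), smul_zero]
  rw [Finset.sum_congr rfl fun g _ => hterm g, Finset.sum_ite_eq' Finset.univ (restr D c),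
    if_pos (Finset.mem_univ _)]

/-- The one-cell elementary operators. -/
noncomputable abbrev siteOp (q₀ : Q) (y : Lat n) (a b : Q) : H n Q q₀ →L[ℂ] H n Q q₀ :=
  kerOp q₀ {y} (fun _ => a) (fun _ => b)

theorem restr_singleton_iff {y : Lat n} {b : Q} {c : Conf n Q q₀} :
    restr ({y} : Finset (Lat n)) c = (fun _ => b) ↔ c.1 y = b := by
  constructor
  · intro h
    exact congrFun h ⟨y, Finset.mem_singleton_self y⟩
  · intro h
    funext x
    have : x.1 = y := Finset.mem_singleton.mp x.2
    rw [show (restr ({y} : Finset (Lat n)) c) x = c.1 x.1 from rfl, this, h]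

theorem siteOp_eVec_of {y : Lat n} {b : Q} {c : Conf n Q q₀} (a : Q) (h : c.1 y = b) :
    siteOp q₀ y a b (eVec c) = eVec (override {y} (fun _ => a) c) :=
  kerOp_eVec_of _ (restr_singleton_iff.mpr h)

theorem siteOp_eVec_ne {y : Lat n} {b : Q} {c : Conf n Q q₀} (a : Q) (h : c.1 y ≠ b) :
    siteOp q₀ y a b (eVec c) = 0 :=
  kerOp_eVec_ne _ (fun hh => h (restr_singleton_iff.mp hh))

theorem override_singleton_self {y : Lat n} (c : Conf n Q q₀) :
    override {y} (fun _ => c.1 y) c = c :=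
  Subtype.ext (funext fun x => by
    by_cases h : x ∈ ({y} : Finset (Lat n))
    · rw [override_val_mem _ _ h, Finset.mem_singleton.mp h]
    · rw [override_val_not_mem _ _ h])

theorem siteOp_apply_of {y : Lat n} {a b : Q} (v : H n Q q₀) {c'' : Conf n Q q₀}
    (h : c''.1 y = a) :
    (siteOp q₀ y a b v) c'' = v (override {y} (fun _ => b) c'') := by
  rw [kerOp_apply]
  by_cases hb : c''.1 y = b
  · have hab : a = b := h.symm.trans hb
    have h1 : restr ({y} : Finset (Lat n)) c'' = (fun _ => b) := restr_singleton_iff.mpr hb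
    have hsw : swapConf {y} (fun _ => a) (fun _ => b) c'' = override {y} (fun _ => b) c'' := by
      rw [swapConf_of_eq h1, hab]
    rw [hsw, if_pos (restr_override _ _)]
  · have h1 : restr ({y} : Finset (Lat n)) c'' ≠ (fun _ => b) :=
      fun hh => hb (restr_singleton_iff.mp hh)
    have h2 : restr ({y} : Finset (Lat n)) c'' = (fun _ => a) := restr_singleton_iff.mpr h
    have hsw : swapConf {y} (fun _ => a) (fun _ => b) c'' = override {y} (fun _ => b) c'' :=
      swapConf_of_eq' h1 h2
    rw [hsw, if_pos (restr_override _ _)]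

theorem siteOp_apply_ne {y : Lat n} {a b : Q} (v : H n Q q₀) {c'' : Conf n Q q₀}
    (h : c''.1 y ≠ a) :
    (siteOp q₀ y a b v) c'' = 0 := by
  rw [kerOp_apply]
  by_cases hb : c''.1 y = b
  · have hsw : swapConf {y} (fun _ => a) (fun _ => b) c'' = override {y} (fun _ => a) c'' :=
      swapConf_of_eq (restr_singleton_iff.mpr hb)
    rw [hsw, if_neg]
    intro hh
    rw [restr_override] at hh
    have : a = b := congrFun hh ⟨y, Finset.mem_singleton_self y⟩
    exact h (this ▸ hb)
  · have h1 : restr ({y} : Finset (Lat n)) c'' ≠ (fun _ => b) :=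
      fun hh => hb (restr_singleton_iff.mp hh)
    have h2 : restr ({y} : Finset (Lat n)) c'' ≠ (fun _ => a) :=
      fun hh => h (restr_singleton_iff.mp hh)
    rw [swapConf_of_ne h1 h2, if_neg h1]

theorem lp_sum_apply {ι : Type*} (s : Finset ι) (F : ι → H n Q q₀) (c : Conf n Q q₀) :
    (∑ i ∈ s, F i) c = ∑ i ∈ s, (F i) c := by
  rw [lp.coeFn_sum]
  exact Finset.sum_apply c s fun i => ⇑(F i)

theorem lp_smul_apply (r : ℂ) (v : H n Q q₀) (c : Conf n Q q₀) :
    (r • v) c = r * v c := by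
  rw [lp.coeFn_smul]; rfl

theorem restr_override_of_disjoint {D₁ D₂ : Finset (Lat n)} (h : Disjoint D₁ D₂)
    (g : {x // x ∈ D₂} → Q) (c : Conf n Q q₀) :
    restr D₁ (override D₂ g c) = restr D₁ c :=
  funext fun x => override_val_not_mem g c (Finset.disjoint_left.mp h x.2)

theorem override_comm {D₁ D₂ : Finset (Lat n)} (h : Disjoint D₁ D₂)
    (f : {x // x ∈ D₁} → Q) (g : {x // x ∈ D₂} → Q) (c : Conf n Q q₀) :
    override D₁ f (override D₂ g c) = override D₂ g (override D₁ f c) :=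
  Subtype.ext (funext fun z => by
    by_cases h1 : z ∈ D₁
    · have h2 : z ∉ D₂ := Finset.disjoint_left.mp h h1
      rw [override_val_mem f _ h1, override_val_not_mem g _ h2, override_val_mem f _ h1]
    · rw [override_val_not_mem f _ h1]
      by_cases h2 : z ∈ D₂
      · rw [override_val_mem g _ h2, override_val_mem g _ h2]
      · rw [override_val_not_mem g _ h2, override_val_not_mem g _ h2,
          override_val_not_mem f _ h1])

theorem comp_comm_of_disjoint {D₁ D₂ : Finset (Lat n)} (hD : Disjoint D₁ D₂)
    {S T : H n Q q₀ →L[ℂ] H n Q q₀} (hS : IsLocalUpon q₀ D₁ S) (hT : IsLocalUpon q₀ D₂ T) :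
    S ∘L T = T ∘L S := by
  obtain ⟨a, ha⟩ := hS
  obtain ⟨b, hb⟩ := hT
  apply clm_ext_eVec
  intro c
  rw [ContinuousLinearMap.comp_apply, ContinuousLinearMap.comp_apply, ha c, hb c,
    map_sum, map_sum]
  have lhs : ∀ g : {x // x ∈ D₂} → Q,
      S (b g (restr D₂ c) • eVec (override D₂ g c))
        = ∑ f : {x // x ∈ D₁} → Q, b g (restr D₂ c) • (a f (restr D₁ c) •
            eVec (override D₂ g (override D₁ f c))) := by
    intro g
    rw [map_smul, ha (override D₂ g c), Finset.smul_sum]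
    refine Finset.sum_congr rfl fun f _ => ?_
    rw [show (fun x : {x // x ∈ D₁} => (override D₂ g c).1 x.1) = restr D₁ (override D₂ g c)
        from rfl,
      restr_override_of_disjoint hD, override_comm hD.symm]
  have rhs : ∀ f : {x // x ∈ D₁} → Q,
      T (a f (restr D₁ c) • eVec (override D₁ f c))
        = ∑ g : {x // x ∈ D₂} → Q, a f (restr D₁ c) • (b g (restr D₂ c) •
            eVec (override D₂ g (override D₁ f c))) := by
    intro f
    rw [map_smul, hb (override D₁ f c), Finset.smul_sum]
    refine Finset.sum_congr rfl fun g _ => ?_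
    rw [show (fun x : {x // x ∈ D₂} => (override D₁ f c).1 x.1) = restr D₂ (override D₁ f c)
        from rfl,
      restr_override_of_disjoint hD.symm]
  rw [Finset.sum_congr rfl fun g _ => lhs g, Finset.sum_congr rfl fun f _ => rhs f,
    Finset.sum_comm]
  refine Finset.sum_congr rfl fun f _ => Finset.sum_congr rfl fun g _ => ?_
  rw [smul_comm]

theorem override_singleton_ne {y : Lat n} (aa : Q) (c : Conf n Q q₀) {z : Lat n} (hz : z ≠ y) :
    (override {y} (fun _ => aa) c).1 z = c.1 z :=
  override_val_not_mem _ _ (fun hm => hz (Finset.mem_singleton.mp hm))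

open Classical in
theorem isLocalUpon_of_commute (q₀ : Q) (D : Finset (Lat n)) (T : H n Q q₀ →L[ℂ] H n Q q₀)
    (hcomm : ∀ y ∉ D, ∀ a b : Q, T ∘L siteOp q₀ y a b = siteOp q₀ y a b ∘L T) :
    IsLocalUpon q₀ D T := by
  classical
  have star : ∀ y ∉ D, ∀ (a b : Q) (c c'' : Conf n Q q₀),
      (if c.1 y = b then (T (eVec (override {y} (fun _ => a) c))) c'' else 0)
        = (if c''.1 y = a then (T (eVec c)) (override {y} (fun _ => b) c'') else 0) := by
    intro y hy a b c c''
    have h0 : (T (siteOp q₀ y a b (eVec c))) c'' = (siteOp q₀ y a b (T (eVec c))) c'' := by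
      rw [← ContinuousLinearMap.comp_apply, ← ContinuousLinearMap.comp_apply, hcomm y hy a b]
    by_cases hb : c.1 y = b
    · rw [if_pos hb]
      rw [siteOp_eVec_of a hb] at h0
      by_cases ha : c''.1 y = a
      · rw [if_pos ha, h0, siteOp_apply_of _ ha]
      · rw [if_neg ha, h0, siteOp_apply_ne _ ha]
    · rw [if_neg hb]
      rw [siteOp_eVec_ne a hb, map_zero] at h0
      have hz : ((0 : H n Q q₀)) c'' = 0 :=
        congrFun (lp.coeFn_zero (fun _ : Conf n Q q₀ => ℂ) 2) c''
      by_cases ha : c''.1 y = a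
      · rw [if_pos ha, ← siteOp_apply_of (b := b) (T (eVec c)) ha, ← h0, hz]
      · rw [if_neg ha]
  have claim1 : ∀ y ∉ D, ∀ c c'' : Conf n Q q₀, c''.1 y ≠ c.1 y → (T (eVec c)) c'' = 0 := by
    intro y hy c c'' hne
    have h := star y hy (c''.1 y) (c''.1 y) c c''
    rw [if_neg (fun hh : c.1 y = c''.1 y => hne hh.symm), if_pos rfl,
      override_singleton_self] at h
    exact h.symm
  have claim2 : ∀ y ∉ D, ∀ (aa : Q) (c c'' : Conf n Q q₀), c''.1 y = c.1 y →
      (T (eVec (override {y} (fun _ => aa) c))) (override {y} (fun _ => aa) c'')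
        = (T (eVec c)) c'' := by
    intro y hy aa c c'' hcc
    have h := star y hy aa (c.1 y) c (override {y} (fun _ => aa) c'')
    rw [if_pos rfl, if_pos (override_val_mem _ _ (Finset.mem_singleton_self y)),
      override_override, ← hcc, override_singleton_self] at h
    exact h
  have reduce : ∀ s : Finset (Lat n), ∀ c c'' : Conf n Q q₀,
      (∀ y, y ∉ D → y ∉ s → c.1 y = q₀) → (∀ y, y ∉ D → c''.1 y = c.1 y) →
      (T (eVec c)) c''
        = (T (eVec (override D (restr D c) (c0 n Q q₀))))
            (override D (restr D c'') (c0 n Q q₀)) := by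
    intro s
    induction s using Finset.induction_on with
    | empty =>
      intro c c'' h1 h2
      have hc : override D (restr D c) (c0 n Q q₀) = c :=
        Subtype.ext (funext fun z => by
          by_cases hz : z ∈ D
          · rw [override_val_mem _ _ hz]
          · rw [override_val_not_mem _ _ hz]
            exact (h1 z hz (Finset.notMem_empty z)).symm)
      have hc'' : override D (restr D c'') (c0 n Q q₀) = c'' :=
        Subtype.ext (funext fun z => by
          by_cases hz : z ∈ D
          · rw [override_val_mem _ _ hz]
          · rw [override_val_not_mem _ _ hz]
            exact ((h2 z hz).trans (h1 z hz (Finset.notMem_empty z))).symm)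
      rw [hc, hc'']
    | @insert y s hys ih =>
      intro c c'' h1 h2
      by_cases hyD : y ∈ D
      · refine ih c c'' (fun z hz hzs => ?_) h2
        have hzy : z ≠ y := fun hzy => hz (hzy ▸ hyD)
        exact h1 z hz (fun hm => hzs (Finset.mem_of_mem_insert_of_ne hm hzy))
      · by_cases hq : c.1 y = q₀
        · refine ih c c'' (fun z hz hzs => ?_) h2
          by_cases hzy : z = y
          · exact hzy ▸ hq
          · exact h1 z hz (fun hm => hzs (Finset.mem_of_mem_insert_of_ne hm hzy))
        · have hagree := h2 y hyD
          have e1 : (T (eVec c)) c''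
              = (T (eVec (override {y} (fun _ => q₀) c))) (override {y} (fun _ => q₀) c'') := by
            have h := claim2 y hyD (c.1 y) (override {y} (fun _ => q₀) c)
              (override {y} (fun _ => q₀) c'') (by
                rw [override_val_mem _ _ (Finset.mem_singleton_self y),
                  override_val_mem _ _ (Finset.mem_singleton_self y)])
            rw [override_override, override_override, override_singleton_self,
              ← hagree, override_singleton_self] at h
            exact h
          rw [e1]
          have h1' : ∀ z, z ∉ D → z ∉ s → (override {y} (fun _ => q₀) c).1 z = q₀ := by
            intro z hz hzs
            by_cases hzy : z = y
            · subst hzy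
              exact override_val_mem _ _ (Finset.mem_singleton_self z)
            · rw [override_singleton_ne _ _ hzy]
              exact h1 z hz (fun hm => hzs (Finset.mem_of_mem_insert_of_ne hm hzy))
          have h2' : ∀ z, z ∉ D →
              (override {y} (fun _ => q₀) c'').1 z = (override {y} (fun _ => q₀) c).1 z := by
            intro z hz
            by_cases hzy : z = y
            · subst hzy
              rw [override_val_mem _ _ (Finset.mem_singleton_self z),
                override_val_mem _ _ (Finset.mem_singleton_self z)]
            · rw [override_singleton_ne _ _ hzy, override_singleton_ne _ _ hzy]
              exact h2 z hz
          rw [ih (override {y} (fun _ => q₀) c) (override {y} (fun _ => q₀) c'') h1' h2']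
          have hr1 : restr D (override {y} (fun _ => q₀) c) = restr D c :=
            funext fun xx => override_singleton_ne _ _
              (fun hxy => hyD (hxy ▸ xx.2))
          have hr2 : restr D (override {y} (fun _ => q₀) c'') = restr D c'' :=
            funext fun xx => override_singleton_ne _ _
              (fun hxy => hyD (hxy ▸ xx.2))
          rw [hr1, hr2]
  refine ⟨fun f' g' => (T (eVec (override D g' (c0 n Q q₀)))) (override D f' (c0 n Q q₀)),
    fun c => ?_⟩
  apply lp.ext
  funext c''
  have hRHS : (∑ f : {x // x ∈ D} → Q,
      (T (eVec (override D (restr D c) (c0 n Q q₀)))) (override D f (c0 n Q q₀)) •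
        eVec (override D f c)) c''
      = ∑ f : {x // x ∈ D} → Q,
          (T (eVec (override D (restr D c) (c0 n Q q₀)))) (override D f (c0 n Q q₀)) *
            (eVec (override D f c)) c'' := by
    rw [lp_sum_apply]
    exact Finset.sum_congr rfl fun f _ => lp_smul_apply _ _ _
  show (T (eVec c)) c'' = _
  rw [hRHS]
  by_cases hA : ∀ y, y ∉ D → c''.1 y = c.1 y
  · have L := reduce c.2.toFinset c c'' (fun y hy hys => by
      by_contra hq
      exact hys ((Set.Finite.mem_toFinset c.2).mpr hq)) hA
    rw [L]
    have hterm : ∀ f : {x // x ∈ D} → Q,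
        (T (eVec (override D (restr D c) (c0 n Q q₀)))) (override D f (c0 n Q q₀)) *
            (eVec (override D f c)) c''
          = if f = restr D c'' then
              (T (eVec (override D (restr D c) (c0 n Q q₀)))) (override D f (c0 n Q q₀))
            else 0 := by
      intro f
      by_cases hf : f = restr D c''
      · rw [if_pos hf]
        have hc : c'' = override D f c :=
          Subtype.ext (funext fun z => by
            by_cases hz : z ∈ D
            · rw [override_val_mem _ _ hz, hf]
            · rw [override_val_not_mem _ _ hz]
              exact hA z hz)
        rw [← hc, eVec_apply_self, mul_one]
      · rw [if_neg hf, eVec_apply_ne, mul_zero]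
        intro hc
        apply hf
        rw [hc, restr_override]
    rw [Finset.sum_congr rfl fun f _ => hterm f,
      Finset.sum_ite_eq' Finset.univ (restr D c''), if_pos (Finset.mem_univ _)]
  · push_neg at hA
    obtain ⟨y, hy, hne⟩ := hA
    rw [claim1 y hy c c'' hne]
    symm
    refine Finset.sum_eq_zero fun f _ => ?_
    rw [eVec_apply_ne, mul_zero]
    intro hc
    apply hne
    rw [hc]
    exact override_val_not_mem _ _ hy

theorem kerOp_empty (q₀ : Q) (f g : {x // x ∈ (∅ : Finset (Lat n))} → Q) :
    kerOp q₀ ∅ f g = 1 := by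
  haveI : IsEmpty {x : Lat n // x ∈ (∅ : Finset (Lat n))} :=
    ⟨fun x => Finset.notMem_empty x.1 x.2⟩
  haveI : Unique ({x : Lat n // x ∈ (∅ : Finset (Lat n))} → Q) := Pi.uniqueOfIsEmpty _
  apply clm_ext_eVec
  intro c
  have hg : restr (∅ : Finset (Lat n)) c = g := Subsingleton.elim _ _
  rw [kerOp_eVec_of f hg, ContinuousLinearMap.one_apply,
    show override (∅ : Finset (Lat n)) f c = c from
      Subtype.ext (funext fun z => override_val_not_mem _ _ (Finset.notMem_empty z))]

theorem kerOp_insert (q₀ : Q) {y : Lat n} {D' : Finset (Lat n)} (hy : y ∉ D')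
    (f g : {x // x ∈ insert y D'} → Q) :
    kerOp q₀ (insert y D') f g
      = siteOp q₀ y (f ⟨y, Finset.mem_insert_self y D'⟩) (g ⟨y, Finset.mem_insert_self y D'⟩)
          ∘L kerOp q₀ D' (fun x => f ⟨x.1, Finset.mem_insert_of_mem x.2⟩)
              (fun x => g ⟨x.1, Finset.mem_insert_of_mem x.2⟩) := by
  apply clm_ext_eVec
  intro c
  rw [ContinuousLinearMap.comp_apply]
  by_cases h1 : restr D' c = (fun x : {x // x ∈ D'} => g ⟨x.1, Finset.mem_insert_of_mem x.2⟩)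
  · rw [kerOp_eVec_of _ h1]
    by_cases h2 : c.1 y = g ⟨y, Finset.mem_insert_self y D'⟩
    · have hgy : (override D' (fun x : {x // x ∈ D'} => f ⟨x.1, Finset.mem_insert_of_mem x.2⟩)
          c).1 y = g ⟨y, Finset.mem_insert_self y D'⟩ := by
        rw [override_val_not_mem _ _ hy]
        exact h2
      rw [siteOp_eVec_of _ hgy]
      have hrg : restr (insert y D') c = g := funext fun x => by
        by_cases hxy : x.1 = y
        · have hx : x = ⟨y, Finset.mem_insert_self y D'⟩ := Subtype.ext hxy
          rw [hx]
          exact h2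
        · exact congrFun h1 ⟨x.1, Finset.mem_of_mem_insert_of_ne x.2 hxy⟩
      rw [kerOp_eVec_of _ hrg]
      congr 1
      refine Subtype.ext (funext fun z => ?_)
      by_cases hzy : z = y
      · subst hzy
        rw [override_val_mem _ _ (Finset.mem_insert_self z D'),
          override_val_mem _ _ (Finset.mem_singleton_self z)]
      · rw [override_val_not_mem (D := ({y} : Finset (Lat n))) _ _
          (fun hm => hzy (Finset.mem_singleton.mp hm))]
        by_cases hzD : z ∈ D'
        · rw [override_val_mem _ _ (Finset.mem_insert_of_mem hzD), override_val_mem _ _ hzD]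
        · rw [override_val_not_mem _ _ (by
            intro hm
            rcases Finset.mem_insert.mp hm with h | h
            · exact hzy h
            · exact hzD h), override_val_not_mem _ _ hzD]
    · have hrg : restr (insert y D') c ≠ g :=
        fun hh => h2 (congrFun hh ⟨y, Finset.mem_insert_self y D'⟩)
      rw [kerOp_eVec_ne _ hrg]
      have hne : (override D' (fun x : {x // x ∈ D'} => f ⟨x.1, Finset.mem_insert_of_mem x.2⟩)
          c).1 y ≠ g ⟨y, Finset.mem_insert_self y D'⟩ := by
        rw [override_val_not_mem _ _ hy]
        exact h2
      rw [siteOp_eVec_ne _ hne]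
  · have hrg : restr (insert y D') c ≠ g := fun hh => h1 (funext fun x =>
      congrFun hh ⟨x.1, Finset.mem_insert_of_mem x.2⟩)
    rw [kerOp_eVec_ne _ hrg, kerOp_eVec_ne _ h1, map_zero]

theorem kerOp_mem_adjoin (q₀ : Q) (D₀ : Finset (Lat n)) :
    ∀ D : Finset (Lat n), D ⊆ D₀ → ∀ f g : {x // x ∈ D} → Q,
      kerOp q₀ D f g ∈ Algebra.adjoin ℂ
        {S : H n Q q₀ →L[ℂ] H n Q q₀ | ∃ y ∈ D₀, ∃ a b : Q, S = siteOp q₀ y a b} := by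
  intro D
  induction D using Finset.induction_on with
  | empty =>
    intro _ f g
    rw [kerOp_empty]
    exact one_mem _
  | @insert y D' hy ih =>
    intro hsub f g
    rw [kerOp_insert q₀ hy f g]
    have h1 : siteOp q₀ y (f ⟨y, Finset.mem_insert_self y D'⟩)
        (g ⟨y, Finset.mem_insert_self y D'⟩) ∈ Algebra.adjoin ℂ
          {S : H n Q q₀ →L[ℂ] H n Q q₀ | ∃ y ∈ D₀, ∃ a b : Q, S = siteOp q₀ y a b} :=
      Algebra.subset_adjoin ⟨y, hsub (Finset.mem_insert_self y D'), _, _, rfl⟩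
    have h2 := ih (fun z hz => hsub (Finset.mem_insert_of_mem hz))
      (fun x => f ⟨x.1, Finset.mem_insert_of_mem x.2⟩)
      (fun x => g ⟨x.1, Finset.mem_insert_of_mem x.2⟩)
    exact mul_mem h1 h2

theorem isLocalUpon_mem_adjoin {D₀ : Finset (Lat n)} {T : H n Q q₀ →L[ℂ] H n Q q₀}
    (hT : IsLocalUpon q₀ D₀ T) :
    T ∈ Algebra.adjoin ℂ
      {S : H n Q q₀ →L[ℂ] H n Q q₀ | ∃ y ∈ D₀, ∃ a b : Q, S = siteOp q₀ y a b} := by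
  obtain ⟨a, ha⟩ := eq_sum_kerOp hT
  rw [ha]
  exact Subalgebra.sum_mem _ fun f _ => Subalgebra.sum_mem _ fun g _ =>
    Subalgebra.smul_mem _ (kerOp_mem_adjoin q₀ D₀ D₀ (subset_refl D₀) f g) _

end Aux7

/-- For a causal unitary `M`, every operator local upon a cell `x` belongs to
the subalgebra generated by the images under conjugation by `M` of the operators local upon
the cells `x - k`, `k ∈ 𝒩`. -/
theorem one_cell_algebra_inside_generated_image_algebras
    (n : ℕ) (hn : 1 ≤ n) (Q : Type) [Fintype Q] (q₀ : Q) (𝒩 : Finset (Lat n))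
    (M : H n Q q₀ →L[ℂ] H n Q q₀) (hM : M ∈ unitary (H n Q q₀ →L[ℂ] H n Q q₀))
    (hC : Causal q₀ 𝒩 M) :
    ∀ (x : Lat n) (A : H n Q q₀ →L[ℂ] H n Q q₀), IsLocalUpon q₀ {x} A →
      A ∈ Algebra.adjoin ℂ (⋃ k : {k // k ∈ 𝒩},
        {T : H n Q q₀ →L[ℂ] H n Q q₀ | ∃ B : H n Q q₀ →L[ℂ] H n Q q₀,
          IsLocalUpon q₀ {x - k.1} B ∧ T = ContinuousLinearMap.adjoint M ∘L B ∘L M}) := by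
  intro x A hA
  classical
  have hMs := Unitary.mem_iff.mp hM
  have hM1 : ∀ v, ContinuousLinearMap.adjoint M (M v) = v := by
    intro v
    have h := congrArg (fun S : H n Q q₀ →L[ℂ] H n Q q₀ => S v) hMs.1
    simpa [ContinuousLinearMap.star_eq_adjoint, ContinuousLinearMap.mul_apply,
      ContinuousLinearMap.one_apply] using h
  have hM2 : ∀ v, M (ContinuousLinearMap.adjoint M v) = v := by
    intro v
    have h := congrArg (fun S : H n Q q₀ →L[ℂ] H n Q q₀ => S v) hMs.2
    simpa [ContinuousLinearMap.star_eq_adjoint, ContinuousLinearMap.mul_apply,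
      ContinuousLinearMap.one_apply] using h
  set Md := ContinuousLinearMap.adjoint M with hMd
  set A' := M ∘L A ∘L Md with hA'
  have hcomm : ∀ y ∉ rnbhd 𝒩 x, ∀ a b : Q,
      A' ∘L siteOp q₀ y a b = siteOp q₀ y a b ∘L A' := by
    intro y hy a b
    have hsite : IsLocalUpon q₀ {y} (siteOp q₀ y a b) := isLocalUpon_kerOp q₀ {y} _ _
    have hloc := hC y (siteOp q₀ y a b) hsite
    have hdis : Disjoint ({x} : Finset (Lat n)) (nbhd 𝒩 y) := by
      rw [Finset.disjoint_left]
      intro z hz hz2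
      rw [Finset.mem_singleton] at hz
      subst hz
      obtain ⟨k, hk, hk2⟩ := Finset.mem_image.mp hz2
      apply hy
      exact Finset.mem_image.mpr ⟨k, hk, by rw [← hk2, add_sub_cancel_right]⟩
    have hAB := comp_comm_of_disjoint hdis hA hloc
    refine ContinuousLinearMap.ext fun v => ?_
    have h1 := congrArg (fun S : H n Q q₀ →L[ℂ] H n Q q₀ => S (Md v)) hAB
    simp only [ContinuousLinearMap.comp_apply] at h1
    rw [hM2 v] at h1
    show A' (siteOp q₀ y a b v) = siteOp q₀ y a b (A' v)
    rw [hA']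
    simp only [ContinuousLinearMap.comp_apply]
    rw [h1, hM2]
  have hloc' : IsLocalUpon q₀ (rnbhd 𝒩 x) A' := isLocalUpon_of_commute q₀ _ A' hcomm
  have hmem := isLocalUpon_mem_adjoin hloc'
  have hAeq : A = Md ∘L A' ∘L M := by
    refine ContinuousLinearMap.ext fun v => ?_
    rw [hA']
    simp only [ContinuousLinearMap.comp_apply]
    rw [hM1, hM1]
  have htrans : ∀ S ∈ Algebra.adjoin ℂ
      {S : H n Q q₀ →L[ℂ] H n Q q₀ | ∃ y ∈ rnbhd 𝒩 x, ∃ a b : Q, S = siteOp q₀ y a b},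
      Md ∘L S ∘L M ∈ Algebra.adjoin ℂ (⋃ k : {k // k ∈ 𝒩},
        {T : H n Q q₀ →L[ℂ] H n Q q₀ | ∃ B : H n Q q₀ →L[ℂ] H n Q q₀,
          IsLocalUpon q₀ {x - k.1} B ∧ T = Md ∘L B ∘L M}) := by
    intro S hS
    induction hS using Algebra.adjoin_induction with
    | mem S hS =>
      obtain ⟨y, hy, a, b, rfl⟩ := hS
      obtain ⟨k, hk, rfl⟩ := Finset.mem_image.mp hy
      refine Algebra.subset_adjoin (Set.mem_iUnion.mpr ⟨⟨k, hk⟩, ?_⟩)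
      exact ⟨siteOp q₀ (x - k) a b, isLocalUpon_kerOp q₀ {x - k} _ _, rfl⟩
    | algebraMap r =>
      have heq : Md ∘L algebraMap ℂ (H n Q q₀ →L[ℂ] H n Q q₀) r ∘L M
          = algebraMap ℂ (H n Q q₀ →L[ℂ] H n Q q₀) r := by
        refine ContinuousLinearMap.ext fun v => ?_
        simp only [Algebra.algebraMap_eq_smul_one, ContinuousLinearMap.comp_apply,
          ContinuousLinearMap.smul_apply, ContinuousLinearMap.one_apply, map_smul]
        rw [hM1]
      rw [heq]
      exact Subalgebra.algebraMap_mem _ r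
    | add u w hu hw hu' hw' =>
      have heq : Md ∘L (u + w) ∘L M = (Md ∘L u ∘L M) + (Md ∘L w ∘L M) := by
        refine ContinuousLinearMap.ext fun v => ?_
        simp only [ContinuousLinearMap.comp_apply, ContinuousLinearMap.add_apply, map_add]
      rw [heq]
      exact add_mem hu' hw'
    | mul u w hu hw hu' hw' =>
      have heq : Md ∘L (u * w) ∘L M = (Md ∘L u ∘L M) * (Md ∘L w ∘L M) := by
        refine ContinuousLinearMap.ext fun v => ?_
        simp only [ContinuousLinearMap.comp_apply, ContinuousLinearMap.mul_apply]
        rw [hM2]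
      rw [heq]
      exact mul_mem hu' hw'
  rw [hAeq]
  exact htrans A' hmem

end QCA
end
end

section
/- Let V be a nonzero finite-dimensional complex inner product space and A a subalgebra of End(V) (containing the identity) that is self-adjoint. Then A is a semisimple ring. -/
set_option synthInstance.maxHeartbeats 1000000
set_option maxHeartbeats 1000000
noncomputable section

/-- STATEMENT 16. A self-adjoint subalgebra (containing the identity) of the endomorphism
algebra of a nonzero finite-dimensional complex inner product space is a semisimple ring. -/
theorem selfadjoint_subalgebra_isSemisimpleRing
    (V : Type) [NormedAddCommGroup V] [InnerProductSpace ℂ V]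
    [FiniteDimensional ℂ V] [Nontrivial V]
    (A : Subalgebra ℂ (Module.End ℂ V))
    (hSA : ∀ a ∈ A, LinearMap.adjoint a ∈ A) :
    IsSemisimpleRing A := by
  classical
  -- Step 1: V is a semisimple A-module, via orthogonal complements.
  have hV : IsSemisimpleModule A V := by
    refine { exists_isCompl := ?_ }
    intro W
    set W' : Submodule ℂ V := W.restrictScalars ℂ with hW'
    have hc : IsCompl W' W'ᗮ := Submodule.isCompl_orthogonal_of_hasOrthogonalProjection
    let U : Submodule A V :=
      { carrier := (W'ᗮ : Submodule ℂ V)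
        add_mem' := fun h1 h2 => W'ᗮ.add_mem h1 h2
        zero_mem' := W'ᗮ.zero_mem
        smul_mem' := by
          intro a v hv
          rw [SetLike.mem_coe, Submodule.mem_orthogonal] at hv ⊢
          intro w hw
          have h1 : a • v = (a : Module.End ℂ V) v := rfl
          rw [h1, ← LinearMap.adjoint_inner_left]
          exact hv _ (W.smul_mem ⟨_, hSA _ a.2⟩ hw) }
    have hUmem : ∀ x : V, x ∈ U ↔ x ∈ W'ᗮ := fun x => Iff.rfl
    have hWmem : ∀ x : V, x ∈ W ↔ x ∈ W' := fun x => Iff.rfl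
    refine ⟨U, ?_, ?_⟩
    · rw [disjoint_iff, eq_bot_iff]
      intro x hx
      have h0 : x ∈ W' ⊓ W'ᗮ := ⟨(hWmem x).1 hx.1, (hUmem x).1 hx.2⟩
      rw [disjoint_iff.1 hc.disjoint] at h0
      simpa using h0
    · rw [codisjoint_iff, eq_top_iff]
      intro v _
      have h0 : v ∈ W' ⊔ W'ᗮ := by
        rw [codisjoint_iff.1 hc.codisjoint]; trivial
      obtain ⟨y, hy, z, hz, rfl⟩ := Submodule.mem_sup.1 h0
      exact Submodule.add_mem_sup ((hWmem y).2 hy) ((hUmem z).2 hz)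
  -- Step 2: A embeds in a finite power of V as an A-module.
  let n := Module.finrank ℂ V
  let b : Module.Basis (Fin n) ℂ V := Module.finBasis ℂ V
  let f : A →ₗ[A] (Fin n → V) :=
    { toFun := fun a i => a • (b i)
      map_add' := by intro x y; funext i; exact add_smul x y (b i)
      map_smul' := by intro x y; funext i; exact mul_smul x y (b i) }
  have hf : Function.Injective f := by
    rw [injective_iff_map_eq_zero]
    intro a ha
    apply Subtype.ext
    apply b.ext
    intro i
    have := congrFun ha i
    simpa using (show (a : Module.End ℂ V) (b i) = 0 from this)
  have hpi : IsSemisimpleModule A (Fin n → V) := by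
    refine isSemisimpleModule_of_isSemisimpleModule_submodule'
      (p := fun i : Fin n => LinearMap.range (LinearMap.single A (fun _ : Fin n => V) i))
      (fun i => IsSemisimpleModule.range _) ?_
    exact LinearMap.iSup_range_single A (fun _ : Fin n => V)
  haveI := hpi
  exact IsSemisimpleModule.congr (M := LinearMap.range f) (LinearEquiv.ofInjective f hf)
end
end
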